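/- arXiv:2305.11807 — 2 statements merged into one kernel-verified Lean document; each statement's English description precedes it below -/
import Mathlib

section
/- Suppose for each i ∈ [m], ℓ_i(θ) = z(h_θ(x_i)) + c·y_i·h_θ(x_i) with private label ỹ_i in place of y_i defining ℓ̃_i. Let L(θ) = (1/m)Σℓ_i(θ) + λ‖θ‖² and L̃(θ) = (1/m)Σℓ̃_i(θ) + λ‖θ‖², both λ-strongly convex with minimizers θ* and θ̃. If |ỹ_i - ŷ_i| ≤ 1 for all i and g_i = max_θ ‖∇_θ h_θ(x_i)‖ exists, then ‖θ̃ - θ*‖ ≤ (|c|/(mλ))·Σ_{i=1}^m |ỹ_i - ŷ_i|·g_i. -/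
open scoped RealInnerProductSpace BigOperators

/-- For a `lam`-strongly convex function on `univ` with global minimizer `a`,
`f x ≥ f a + lam/2 * ‖x - a‖²`. -/
lemma strong_min_aux {E : Type*} [NormedAddCommGroup E] [InnerProductSpace ℝ E]
    {lam : ℝ} {f : E → ℝ}
    (hsc : ConvexOn ℝ Set.univ (fun θ => f θ - lam / 2 * ‖θ‖ ^ 2))
    (a : E) (ha : ∀ y, f a ≤ f y) (x : E) :
    f a + lam / 2 * ‖x - a‖ ^ 2 ≤ f x := by
  have hS : StrongConvexOn Set.univ lam f := strongConvexOn_iff_convex.mpr hsc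
  have key : ∀ t ∈ Set.Ioo (0:ℝ) 1, lam / 2 * (1 - t) * ‖x - a‖ ^ 2 ≤ f x - f a := by
    intro t ht
    have h1 := hS.2 (Set.mem_univ x) (Set.mem_univ a) (le_of_lt ht.1)
      (by linarith [ht.2] : (0:ℝ) ≤ 1 - t) (by ring)
    have h2 := ha (t • x + (1 - t) • a)
    simp only [smul_eq_mul] at h1
    have ht0 : 0 < t := ht.1
    nlinarith [h1, h2]
  have hlim : Filter.Tendsto (fun t : ℝ => lam / 2 * (1 - t) * ‖x - a‖ ^ 2)
      (nhdsWithin 0 (Set.Ioi 0)) (nhds (lam / 2 * (1 - 0) * ‖x - a‖ ^ 2)) := by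
    apply Filter.Tendsto.mono_left _ nhdsWithin_le_nhds
    exact (Continuous.tendsto (by continuity) 0)
  have hev : ∀ᶠ t in nhdsWithin (0:ℝ) (Set.Ioi 0),
      lam / 2 * (1 - t) * ‖x - a‖ ^ 2 ≤ f x - f a := by
    filter_upwards [Ioo_mem_nhdsGT_of_mem (Set.mem_Ico.mpr ⟨le_refl (0:ℝ), zero_lt_one⟩)]
      with t ht using key t ht
  have := le_of_tendsto hlim hev
  simp only [sub_zero, mul_one] at this
  linarith

/-- Deterministic model-deviation bound (core of Theorem 2): for decomposable losses
`ℓ_i(θ) = z(h_θ(x_i)) + c·y_i·h_θ(x_i)`, the regularized empirical risks `L` (with labels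
`ŷ`) and `L̃` (with private labels `ỹ`), both `λ`-strongly convex with minimizers `θ*`
and `θ̃`, satisfy `‖θ̃ - θ*‖ ≤ (|c|/(mλ))·Σ_i |ỹ_i - ŷ_i|·g_i`, where
`g_i = max_θ ‖∇_θ h_θ(x_i)‖`. -/
theorem stmt_7 {d m : ℕ} (hm : 0 < m) {X : Type*}
    (lam c : ℝ) (hlam : 0 < lam)
    (h : EuclideanSpace ℝ (Fin d) → X → ℝ) (z : ℝ → ℝ)
    (x : Fin m → X) (yh yt : Fin m → ℝ) (g : Fin m → ℝ)
    (hdiff : ∀ i, Differentiable ℝ (fun θ => h θ (x i)))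
    (hg : ∀ i, IsGreatest
      (Set.range fun θ : EuclideanSpace ℝ (Fin d) =>
        ‖gradient (fun θ' => h θ' (x i)) θ‖) (g i))
    (hflip : ∀ i, |yt i - yh i| ≤ 1)
    (L Lt : EuclideanSpace ℝ (Fin d) → ℝ)
    (hLdef : L = fun θ =>
      (1 / (m : ℝ)) * ∑ i, (z (h θ (x i)) + c * yh i * h θ (x i)) + lam * ‖θ‖ ^ 2)
    (hLtdef : Lt = fun θ =>
      (1 / (m : ℝ)) * ∑ i, (z (h θ (x i)) + c * yt i * h θ (x i)) + lam * ‖θ‖ ^ 2)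
    (hLd : Differentiable ℝ L) (hLtd : Differentiable ℝ Lt)
    (hLsc : ConvexOn ℝ Set.univ (fun θ => L θ - lam / 2 * ‖θ‖ ^ 2))
    (hLtsc : ConvexOn ℝ Set.univ (fun θ => Lt θ - lam / 2 * ‖θ‖ ^ 2))
    (θs θt : EuclideanSpace ℝ (Fin d))
    (hθs : ∀ θ, L θs ≤ L θ) (hθt : ∀ θ, Lt θt ≤ Lt θ) :
    ‖θt - θs‖ ≤ |c| / (m * lam) * ∑ i, |yt i - yh i| * g i := by
  have hm' : (0:ℝ) < m := Nat.cast_pos.mpr hm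
  -- the difference function
  set D : EuclideanSpace ℝ (Fin d) → ℝ :=
    fun θ => (1 / (m : ℝ)) * ∑ i, (c * (yt i - yh i)) * h θ (x i) with hDdef
  have hDeq : ∀ θ, Lt θ - L θ = D θ := by
    intro θ
    simp only [hLdef, hLtdef, hDdef]
    rw [show ((1 / (m : ℝ)) * ∑ i, (z (h θ (x i)) + c * yt i * h θ (x i)) + lam * ‖θ‖ ^ 2)
        - ((1 / (m : ℝ)) * ∑ i, (z (h θ (x i)) + c * yh i * h θ (x i)) + lam * ‖θ‖ ^ 2)
        = (1 / (m : ℝ)) * (∑ i, (z (h θ (x i)) + c * yt i * h θ (x i))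
          - ∑ i, (z (h θ (x i)) + c * yh i * h θ (x i))) from by ring]
    rw [← Finset.sum_sub_distrib]
    congr 1
    exact Finset.sum_congr rfl fun i _ => by ring
  -- bound on the derivative of D
  set C : ℝ := (1 / (m : ℝ)) * ∑ i, |c| * |yt i - yh i| * g i with hCdef
  have hgnn : ∀ i, 0 ≤ g i := by
    intro i
    obtain ⟨θ0, hθ0⟩ := (hg i).1
    exact hθ0 ▸ norm_nonneg _
  have hgrad_norm : ∀ i θ, ‖fderiv ℝ (fun θ' => h θ' (x i)) θ‖ ≤ g i := by
    intro i θ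
    have : ‖gradient (fun θ' => h θ' (x i)) θ‖ = ‖fderiv ℝ (fun θ' => h θ' (x i)) θ‖ := by
      simp [gradient, LinearIsometryEquiv.norm_map]
    exact this ▸ (hg i).2 ⟨θ, rfl⟩
  have hDdiff : ∀ θ, DifferentiableAt ℝ D θ := by
    intro θ
    apply DifferentiableAt.const_mul
    exact DifferentiableAt.fun_sum fun i _ => ((hdiff i θ).const_mul _)
  have hDbound : ∀ θ, ‖fderiv ℝ D θ‖ ≤ C := by
    intro θ
    have hsum : fderiv ℝ D θ = (1 / (m : ℝ)) •
        ∑ i, (c * (yt i - yh i)) • fderiv ℝ (fun θ' => h θ' (x i)) θ := by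
      rw [hDdef]
      rw [fderiv_const_mul (DifferentiableAt.fun_sum fun i _ => ((hdiff i θ).const_mul _))]
      congr 1
      rw [fderiv_fun_sum fun i _ => ((hdiff i θ).const_mul _)]
      exact Finset.sum_congr rfl fun i _ => fderiv_const_mul (hdiff i θ) _
    rw [hsum, hCdef]
    rw [norm_smul]
    have h1 : ‖∑ i, (c * (yt i - yh i)) • fderiv ℝ (fun θ' => h θ' (x i)) θ‖
        ≤ ∑ i, |c| * |yt i - yh i| * g i := by
      refine (norm_sum_le _ _).trans (Finset.sum_le_sum fun i _ => ?_)
      rw [norm_smul, Real.norm_eq_abs, abs_mul]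
      gcongr
      exact hgrad_norm i θ
    have h2 : ‖(1 / (m : ℝ))‖ = 1 / (m : ℝ) := by
      rw [Real.norm_eq_abs, abs_of_pos (by positivity)]
    rw [h2]
    exact mul_le_mul_of_nonneg_left h1 (by positivity)
  -- mean value theorem
  have hMVT : ‖D θs - D θt‖ ≤ C * ‖θs - θt‖ :=
    convex_univ.norm_image_sub_le_of_norm_fderiv_le (fun θ' _ => hDdiff θ')
      (fun θ' _ => hDbound θ') (Set.mem_univ θt) (Set.mem_univ θs)
  -- strong convexity
  have hA := strong_min_aux hLsc θs hθs θt
  have hB := strong_min_aux hLtsc θt hθt θs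
  have hnormrev : ‖θs - θt‖ = ‖θt - θs‖ := norm_sub_rev _ _
  have hkey : lam * ‖θt - θs‖ ^ 2 ≤ C * ‖θt - θs‖ := by
    have e1 : Lt θs - L θs = D θs := hDeq θs
    have e2 : Lt θt - L θt = D θt := hDeq θt
    have e3 : D θs - D θt ≤ ‖D θs - D θt‖ := le_abs_self _
    have e4 : ‖θs - θt‖ ^ 2 = ‖θt - θs‖ ^ 2 := by rw [hnormrev]
    rw [hnormrev] at hMVT
    nlinarith [hA, hB, e3, hMVT]
  have hCnn : 0 ≤ C := by
    rw [hCdef]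
    exact mul_nonneg (by positivity)
      (Finset.sum_nonneg fun i _ => mul_nonneg (by positivity) (hgnn i))
  have hfinal : ‖θt - θs‖ ≤ C / lam := by
    rcases eq_or_lt_of_le (norm_nonneg (θt - θs)) with h0 | h0
    · rw [← h0]; exact div_nonneg hCnn hlam.le
    · have : lam * ‖θt - θs‖ ≤ C := by
        have := hkey
        nlinarith
      rw [le_div_iff₀ hlam]
      linarith [this]
  calc ‖θt - θs‖ ≤ C / lam := hfinal
    _ = |c| / (m * lam) * ∑ i, |yt i - yh i| * g i := by
        rw [hCdef, Finset.mul_sum, Finset.mul_sum]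
        rw [div_eq_mul_inv, Finset.sum_mul]
        refine Finset.sum_congr rfl fun i _ => ?_
        field_simp
end

section
/- For a logistic regression classifier, under the assumptions of Theorem 2 of the paper, the expected model deviation satisfies E[‖θ̃ - θ*‖] ≤ (1/(mλ))·Σ_{i=1}^m p_i·‖x_i‖. -/
open MeasureTheory
open scoped RealInnerProductSpace BigOperators

/-- The logistic sigmoid `σ(t) = 1/(1 + e^{-t})`. -/
noncomputable def sigmoid (t : ℝ) : ℝ := 1 / (1 + Real.exp (-t))

/-- Binary cross-entropy loss of logistic regression at sample `(x, y)`. -/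
noncomputable def logLoss {d : ℕ} (θ x : EuclideanSpace ℝ (Fin d)) (y : ℝ) : ℝ :=
  -(y * Real.log (sigmoid ⟪θ, x⟫)) - (1 - y) * Real.log (1 - sigmoid ⟪θ, x⟫)

lemma logLoss_sub {d : ℕ} (θ x : EuclideanSpace ℝ (Fin d)) (a b : ℝ) :
    logLoss θ x a - logLoss θ x b = (b - a) * ⟪θ, x⟫ := by
  set t := ⟪θ, x⟫ with ht
  have hs : (0:ℝ) < Real.exp (-t) := Real.exp_pos _
  have h1 : (0:ℝ) < 1 + Real.exp (-t) := by linarith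
  have hσ1 : Real.log (sigmoid t) = - Real.log (1 + Real.exp (-t)) := by
    rw [sigmoid, one_div, Real.log_inv]
  have h1σ : 1 - sigmoid t = Real.exp (-t) / (1 + Real.exp (-t)) := by
    rw [sigmoid]; field_simp; ring
  have hσ2 : Real.log (1 - sigmoid t) = -t - Real.log (1 + Real.exp (-t)) := by
    rw [h1σ, Real.log_div hs.ne' h1.ne', Real.log_exp]
  simp only [logLoss, ← ht, hσ1, hσ2]
  ring

lemma strong_min {d : ℕ} (lam : ℝ) (hlam : 0 < lam) (f : EuclideanSpace ℝ (Fin d) → ℝ)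
    (hc : ConvexOn ℝ Set.univ (fun θ => f θ - lam / 2 * ‖θ‖ ^ 2))
    (θs : EuclideanSpace ℝ (Fin d)) (hmin : ∀ θ, f θs ≤ f θ)
    (θ : EuclideanSpace ℝ (Fin d)) :
    f θs + lam / 2 * ‖θ - θs‖ ^ 2 ≤ f θ := by
  by_cases hθ : θ = θs
  · simp [hθ, hmin θs]
  have hD : 0 < ‖θ - θs‖ ^ 2 := by
    have h0 : θ - θs ≠ 0 := sub_ne_zero.mpr hθ
    exact pow_pos (norm_pos_iff.mpr h0) 2
  set D := ‖θ - θs‖ ^ 2 with hDdef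
  have key : ∀ t : ℝ, 0 < t → t ≤ 1 → f θs + lam / 2 * (1 - t) * D ≤ f θ := by
    intro t ht0 ht1
    have hcomb := hc.2 (Set.mem_univ θs) (Set.mem_univ θ) (by linarith : (0:ℝ) ≤ 1 - t)
      ht0.le (by ring)
    simp only [smul_eq_mul] at hcomb
    have hnorm : ‖(1 - t) • θs + t • θ‖ ^ 2
        = (1 - t) * ‖θs‖ ^ 2 + t * ‖θ‖ ^ 2 - t * (1 - t) * ‖θs - θ‖ ^ 2 := by
      have e1 : ‖(1 - t) • θs + t • θ‖ ^ 2
          = ‖(1 - t) • θs‖ ^ 2 + 2 * ⟪(1 - t) • θs, t • θ⟫ + ‖t • θ‖ ^ 2 :=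
        norm_add_sq_real _ _
      have e2 : ‖θs - θ‖ ^ 2 = ‖θs‖ ^ 2 - 2 * ⟪θs, θ⟫ + ‖θ‖ ^ 2 := norm_sub_sq_real _ _
      have e3 : ⟪(1 - t) • θs, t • θ⟫ = (1 - t) * (t * ⟪θs, θ⟫) := by
        rw [real_inner_smul_left, real_inner_smul_right]
      have e4 : ‖(1 - t) • θs‖ ^ 2 = (1 - t) ^ 2 * ‖θs‖ ^ 2 := by
        rw [norm_smul, Real.norm_eq_abs, mul_pow, sq_abs]
      have e5 : ‖t • θ‖ ^ 2 = t ^ 2 * ‖θ‖ ^ 2 := by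
        rw [norm_smul, Real.norm_eq_abs, mul_pow, sq_abs]
      rw [e1, e3, e4, e5, e2]; ring
    have hmin' := hmin ((1 - t) • θs + t • θ)
    have hrev : ‖θs - θ‖ ^ 2 = D := by rw [hDdef, norm_sub_rev]
    rw [hnorm, hrev] at hcomb
    have ht' : t * (f θs + lam / 2 * (1 - t) * D) ≤ t * f θ := by nlinarith
    exact le_of_mul_le_mul_left ht' ht0
  refine le_of_forall_pos_le_add fun ε hε => ?_
  have hq : 0 < lam / 2 * D := by positivity
  set t : ℝ := min 1 (ε / (lam / 2 * D)) with htdef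
  have ht0 : 0 < t := lt_min one_pos (by positivity)
  have ht1 : t ≤ 1 := min_le_left _ _
  have hk := key t ht0 ht1
  have : lam / 2 * t * D ≤ ε := by
    have h2 : t ≤ ε / (lam / 2 * D) := min_le_right _ _
    calc lam / 2 * t * D = t * (lam / 2 * D) := by ring
      _ ≤ (ε / (lam / 2 * D)) * (lam / 2 * D) := by
          exact mul_le_mul_of_nonneg_right h2 hq.le
      _ = ε := by field_simp
  nlinarith

/-- Corollary 1: for a logistic regression student model trained on public samples `x_i`
with clean voted labels `ŷ_i` (risk `L`, minimizer `θ*`) and random noisy labels `ỹ_i`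
(risk `L̃`, minimizer `θ̃`), where each flip `|ŷ_i - ỹ_i|` is Bernoulli with flipping
probability `p_i`, the expected model deviation satisfies
`E[‖θ̃ - θ*‖] ≤ (1/(mλ))·Σ_i p_i·‖x_i‖`. -/
theorem stmt_12 {d m : ℕ} (hm : 0 < m)
    {Ω : Type*} [MeasurableSpace Ω] (μ : Measure Ω) [IsProbabilityMeasure μ]
    (lam : ℝ) (hlam : 0 < lam)
    (x : Fin m → EuclideanSpace ℝ (Fin d))
    (yh : Fin m → ℝ) (yt : Ω → Fin m → ℝ) (p : Fin m → ℝ)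
    (L : EuclideanSpace ℝ (Fin d) → ℝ)
    (Lt : Ω → EuclideanSpace ℝ (Fin d) → ℝ)
    (hLdef : L = fun θ => (1 / (m : ℝ)) * ∑ i, logLoss θ (x i) (yh i) + lam * ‖θ‖ ^ 2)
    (hLtdef : ∀ ω, Lt ω = fun θ =>
      (1 / (m : ℝ)) * ∑ i, logLoss θ (x i) (yt ω i) + lam * ‖θ‖ ^ 2)
    (hLsc : ConvexOn ℝ Set.univ (fun θ => L θ - lam / 2 * ‖θ‖ ^ 2))
    (hLtsc : ∀ ω, ConvexOn ℝ Set.univ (fun θ => Lt ω θ - lam / 2 * ‖θ‖ ^ 2))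
    (θs : EuclideanSpace ℝ (Fin d)) (θt : Ω → EuclideanSpace ℝ (Fin d))
    (hθs : ∀ θ, L θs ≤ L θ) (hθt : ∀ ω θ, Lt ω (θt ω) ≤ Lt ω θ)
    (hbernoulli : ∀ i ω, |yh i - yt ω i| = 0 ∨ |yh i - yt ω i| = 1)
    (hflipint : ∀ i, Integrable (fun ω => |yh i - yt ω i|) μ)
    (hp : ∀ i, ∫ ω, |yh i - yt ω i| ∂μ = p i)
    (hint : Integrable (fun ω => ‖θt ω - θs‖) μ) :
    (∫ ω, ‖θt ω - θs‖ ∂μ) ≤ 1 / (m * lam) * ∑ i, p i * ‖x i‖ := by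
  have hm' : (0:ℝ) < m := Nat.cast_pos.mpr hm
  -- pointwise bound
  have hptwise : ∀ ω, ‖θt ω - θs‖
      ≤ 1 / (m * lam) * ∑ i, |yh i - yt ω i| * ‖x i‖ := by
    intro ω
    obtain ⟨D, hDdef⟩ : ∃ D, D = ‖θt ω - θs‖ := ⟨_, rfl⟩
    rw [← hDdef]
    have hg1 := strong_min lam hlam L hLsc θs hθs (θt ω)
    have hg2 := strong_min lam hlam (Lt ω) (hLtsc ω) (θt ω) (hθt ω) θs
    rw [← hDdef] at hg1
    have hrev : ‖θs - θt ω‖ = D := by rw [hDdef]; exact norm_sub_rev _ _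
    rw [hrev] at hg2
    -- difference of risks is linear
    have hLdiff : ∀ θ, L θ - Lt ω θ
        = (1 / (m:ℝ)) * ∑ i, (yt ω i - yh i) * ⟪θ, x i⟫ := by
      intro θ
      have hsum : (∑ i, logLoss θ (x i) (yh i)) - (∑ i, logLoss θ (x i) (yt ω i))
          = ∑ i, (yt ω i - yh i) * ⟪θ, x i⟫ := by
        rw [← Finset.sum_sub_distrib]
        exact Finset.sum_congr rfl fun i _ => logLoss_sub θ (x i) (yh i) (yt ω i)
      rw [hLdef, hLtdef ω]
      simp only
      linarith [congrArg (fun z => 1 / (m:ℝ) * z) hsum,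
        mul_sub (1 / (m:ℝ)) (∑ i, logLoss θ (x i) (yh i)) (∑ i, logLoss θ (x i) (yt ω i))]
    have hsum2 : (L (θt ω) - Lt ω (θt ω)) - (L θs - Lt ω θs)
        = (1 / (m:ℝ)) * ∑ i, (yt ω i - yh i) * ⟪θt ω - θs, x i⟫ := by
      rw [hLdiff (θt ω), hLdiff θs, ← mul_sub, ← Finset.sum_sub_distrib]
      congr 1
      refine Finset.sum_congr rfl fun i _ => ?_
      rw [← mul_sub, ← inner_sub_left]
    have hterm : ∀ i : Fin m, (yt ω i - yh i) * ⟪θt ω - θs, x i⟫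
        ≤ |yh i - yt ω i| * ‖x i‖ * D := by
      intro i
      calc (yt ω i - yh i) * ⟪θt ω - θs, x i⟫
          ≤ |(yt ω i - yh i) * ⟪θt ω - θs, x i⟫| := le_abs_self _
        _ = |yh i - yt ω i| * |⟪θt ω - θs, x i⟫| := by
            rw [abs_mul, abs_sub_comm]
        _ ≤ |yh i - yt ω i| * (‖θt ω - θs‖ * ‖x i‖) := by
            exact mul_le_mul_of_nonneg_left (abs_real_inner_le_norm _ _) (abs_nonneg _)
        _ = |yh i - yt ω i| * ‖x i‖ * D := by rw [hDdef]; ring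
    have hkey : lam * D ^ 2 ≤ (1 / (m:ℝ)) * ∑ i, |yh i - yt ω i| * ‖x i‖ * D := by
      have hs := Finset.sum_le_sum fun i (_ : i ∈ Finset.univ) => hterm i
      have h1m : (0:ℝ) ≤ 1 / (m:ℝ) := by positivity
      linarith [mul_le_mul_of_nonneg_left hs h1m]
    have hSnn : (0:ℝ) ≤ ∑ i, |yh i - yt ω i| * ‖x i‖ :=
      Finset.sum_nonneg fun i _ => mul_nonneg (abs_nonneg _) (norm_nonneg _)
    have hDnn : 0 ≤ D := hDdef ▸ norm_nonneg _
    rcases eq_or_lt_of_le hDnn with h0 | h0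
    · rw [← h0]
      exact mul_nonneg (by positivity) hSnn
    · have hfac : ∑ i, |yh i - yt ω i| * ‖x i‖ * D
          = (∑ i, |yh i - yt ω i| * ‖x i‖) * D := (Finset.sum_mul ..).symm
      rw [hfac] at hkey
      have hlD : lam * D ≤ (1 / (m:ℝ)) * ∑ i, |yh i - yt ω i| * ‖x i‖ := by
        nlinarith [hkey]
      have h4 : (m:ℝ) * lam * D ≤ ∑ i, |yh i - yt ω i| * ‖x i‖ := by
        calc (m:ℝ) * lam * D = (m:ℝ) * (lam * D) := by ring
          _ ≤ (m:ℝ) * ((1 / (m:ℝ)) * ∑ i, |yh i - yt ω i| * ‖x i‖) :=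
              mul_le_mul_of_nonneg_left hlD hm'.le
          _ = ∑ i, |yh i - yt ω i| * ‖x i‖ := by field_simp
      rw [one_div, inv_mul_eq_div, le_div_iff₀ (by positivity : (0:ℝ) < (m:ℝ) * lam)]
      linarith
  -- integrate
  have hRint : Integrable
      (fun ω => 1 / ((m:ℝ) * lam) * ∑ i, |yh i - yt ω i| * ‖x i‖) μ :=
    (integrable_finset_sum _ fun i _ => (hflipint i).mul_const _).const_mul _
  calc (∫ ω, ‖θt ω - θs‖ ∂μ)
      ≤ ∫ ω, 1 / ((m:ℝ) * lam) * ∑ i, |yh i - yt ω i| * ‖x i‖ ∂μ :=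
        integral_mono hint hRint hptwise
    _ = 1 / ((m:ℝ) * lam) * ∑ i, (∫ ω, |yh i - yt ω i| ∂μ) * ‖x i‖ := by
        rw [integral_const_mul, integral_finset_sum]
        · congr 1
          exact Finset.sum_congr rfl fun i _ => integral_mul_const _ _
        · exact fun i _ => (hflipint i).mul_const _
    _ = 1 / ((m:ℝ) * lam) * ∑ i, p i * ‖x i‖ := by
        congr 1; exact Finset.sum_congr rfl fun i _ => by rw [hp i]
end
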